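/- Let p be an odd prime, q = p^s, and t = (q+1)/2. Then over F_p, the polynomial F(x) = (x+2)^t - (x-2)^t equals 2·D_{(q-1)/2}(x, 1), where D_n(x,1) is the Dickson polynomial of the first kind. -/

import Mathlib

/-- For `p` an odd prime, `q = p^s`, `t = (q+1)/2`, over `F_p` the polynomial
`(x+2)^t - (x-2)^t` equals `2·D_{(q-1)/2}(x, 1)`. -/
theorem stmt_11 (p s : ℕ) (hp : p.Prime) (hpodd : Odd p) :
    ((Polynomial.X + Polynomial.C 2) ^ ((p ^ s + 1) / 2)
        - (Polynomial.X - Polynomial.C 2) ^ ((p ^ s + 1) / 2) : Polynomial (ZMod p))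
      = 2 * Polynomial.dickson 1 1 ((p ^ s - 1) / 2) := by
  have hp1 : Fact p.Prime := ⟨hp⟩
  have hq : Odd (p ^ s) := hpodd.pow
  obtain ⟨k, hk⟩ := hq
  have hq1 : 1 ≤ p ^ s := Nat.one_le_pow _ _ hp.pos
  have ht : (p ^ s + 1) / 2 = k + 1 := by omega
  have hn : (p ^ s - 1) / 2 = k := by omega
  rw [ht, hn]
  set K := AlgebraicClosure (ZMod p)
  have hinj : Function.Injective (Polynomial.map (algebraMap (ZMod p) K)) :=
    Polynomial.map_injective _ (algebraMap (ZMod p) K).injective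
  apply hinj
  apply Polynomial.funext
  intro x
  have hchar : CharP K p := inferInstance
  have h2 : (2 : K) ≠ 0 := by
    intro h
    have hdvd : p ∣ 2 := (CharP.cast_eq_zero_iff K p 2).mp (by exact_mod_cast h)
    have hpe := (Nat.prime_dvd_prime_iff_eq hp Nat.prime_two).mp hdvd
    rw [hpe, Nat.odd_iff] at hpodd
    omega
  obtain ⟨d, hd⟩ := IsAlgClosed.exists_pow_nat_eq (k := K) (x ^ 2 - 4) (n := 2) two_pos
  obtain ⟨y, z, hyz, hxyz⟩ : ∃ y z : K, y * z = 1 ∧ y + z = x :=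
    ⟨(x + d) / 2, (x - d) / 2, by rw [div_mul_div_comm, div_eq_one_iff_eq (mul_ne_zero h2 h2)]; linear_combination -hd,
      by rw [← add_div, div_eq_iff h2]; ring⟩
  have hy0 : y ≠ 0 := left_ne_zero_of_mul_eq_one hyz
  have key : (y + 1) ^ p ^ s = y ^ p ^ s + 1 := by
    rw [add_pow_char_pow, one_pow]
  have key2 : (y - 1) ^ p ^ s = y ^ p ^ s - 1 := by
    rw [sub_pow_char_pow, one_pow]
  have hy2 : y * (x + 2) = (y + 1) ^ 2 := by rw [← hxyz]; linear_combination hyz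
  have hy3 : y * (x - 2) = (y - 1) ^ 2 := by rw [← hxyz]; linear_combination hyz
  have hdick : (Polynomial.dickson 1 (1 : K) k).eval x = y ^ k + z ^ k := by
    rw [← hxyz]; exact Polynomial.dickson_one_one_eval_add_inv y z hyz k
  simp only [Polynomial.eval_map, Polynomial.map_sub, Polynomial.map_pow, Polynomial.map_add,
    Polynomial.map_X, Polynomial.map_C, Polynomial.map_mul, Polynomial.map_ofNat,
    Polynomial.map_dickson, map_one, Polynomial.eval₂_eq_eval_map]
  simp only [Polynomial.map_sub, Polynomial.map_pow, Polynomial.map_add, Polynomial.map_X,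
    Polynomial.map_C, Polynomial.map_mul, Polynomial.map_ofNat, Polynomial.map_dickson, map_one,
    map_ofNat, Polynomial.eval_sub, Polynomial.eval_pow, Polynomial.eval_add, Polynomial.eval_X,
    Polynomial.eval_C, Polynomial.eval_mul, Polynomial.eval_ofNat, hdick]
  apply mul_left_cancel₀ (pow_ne_zero (k + 1) hy0)
  have hyzk : (y * z) ^ k = 1 := by rw [hyz, one_pow]
  calc y ^ (k + 1) * ((x + 2) ^ (k + 1) - (x - 2) ^ (k + 1))
      = (y * (x + 2)) ^ (k + 1) - (y * (x - 2)) ^ (k + 1) := by rw [mul_pow, mul_pow]; ring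
    _ = (y + 1) ^ (2 * (k + 1)) - (y - 1) ^ (2 * (k + 1)) := by
        rw [hy2, hy3, ← pow_mul, ← pow_mul]
    _ = (y + 1) ^ p ^ s * (y + 1) - (y - 1) ^ p ^ s * (y - 1) := by
        rw [show 2 * (k + 1) = p ^ s + 1 by omega, pow_succ, pow_succ]
    _ = (y ^ p ^ s + 1) * (y + 1) - (y ^ p ^ s - 1) * (y - 1) := by rw [key, key2]
    _ = 2 * y ^ (2 * k + 1) + 2 * y := by rw [show p ^ s = 2 * k + 1 by omega]; ring
    _ = y ^ (k + 1) * (2 * (y ^ k + z ^ k)) := by linear_combination (-2 * y) * hyzk
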